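/- Let a, e be real numbers with e > 0 and a > e + 1, and let ν : ℕ → ℕ be a finitely supported function such that ν_m = 0 unless 2 ≤ m ≤ a − e + 1, and such that Σ_m m(m−1)·ν_m = 3a(3a−1) − (2a+e)(2a+e−1). Then (2a+e)(2a+e−1)/e > 3(3a−1) + Σ_m (m(m−1)/(2a−m))·ν_m. (The key combinatorial inequality in the proof of Proposition 1.8.) -/

import Mathlib

/-- The key combinatorial inequality in the proof of Proposition 1.8: for real `a, e` with
`e > 0`, `a > e + 1`, and a finitely supported `ν : ℕ → ℕ` supported in `[2, a - e + 1]`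
with `Σₘ m(m-1)νₘ = 3a(3a-1) - (2a+e)(2a+e-1)`, one has
`(2a+e)(2a+e-1)/e > 3(3a-1) + Σₘ (m(m-1)/(2a-m))νₘ`. -/
theorem statement7 (a e : ℝ) (he : 0 < e) (ha : e + 1 < a) (ν : ℕ →₀ ℕ)
    (hsupp : ∀ m, ν m ≠ 0 → 2 ≤ m ∧ (m : ℝ) ≤ a - e + 1)
    (hsum : ∑ m ∈ ν.support, (m : ℝ) * ((m : ℝ) - 1) * (ν m : ℝ)
      = 3 * a * (3 * a - 1) - (2 * a + e) * (2 * a + e - 1)) :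
    3 * (3 * a - 1) + ∑ m ∈ ν.support, (m : ℝ) * ((m : ℝ) - 1) / (2 * a - (m : ℝ)) * (ν m : ℝ)
      < (2 * a + e) * (2 * a + e - 1) / e := by
  have hae : 0 < a + e - 1 := by nlinarith
  have hsum_le : ∑ m ∈ ν.support, (m : ℝ) * ((m : ℝ) - 1) / (2 * a - (m : ℝ)) * (ν m : ℝ)
      ≤ (∑ m ∈ ν.support, (m : ℝ) * ((m : ℝ) - 1) * (ν m : ℝ)) / (a + e - 1) := by
    rw [Finset.sum_div]
    apply Finset.sum_le_sum
    intro m hm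
    obtain ⟨h2', h3⟩ := hsupp m (Finsupp.mem_support_iff.mp hm)
    have h2 : (2:ℝ) ≤ (m:ℝ) := by exact_mod_cast h2'
    have hden : 0 < 2 * a - (m:ℝ) := by nlinarith
    have hmm : 0 ≤ (m:ℝ) * ((m:ℝ) - 1) := by nlinarith
    have hν : 0 ≤ (ν m : ℝ) := Nat.cast_nonneg _
    rw [div_mul_eq_mul_div, div_le_div_iff₀ hden hae]
    nlinarith [mul_nonneg hmm hν]
  set S := 3 * a * (3 * a - 1) - (2 * a + e) * (2 * a + e - 1) with hS
  rw [hsum] at hsum_le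
  have h1 : S / (a + e - 1) * (a + e - 1) = S := div_mul_cancel₀ _ (ne_of_gt hae)
  have h2 : (2 * a + e) * (2 * a + e - 1) / e * e = (2 * a + e) * (2 * a + e - 1) :=
    div_mul_cancel₀ _ (ne_of_gt he)
  have key : 3 * (3 * a - 1) + S / (a + e - 1) < (2 * a + e) * (2 * a + e - 1) / e := by
    nlinarith [mul_pos he hae, sq_nonneg (a - e), sq_nonneg (a - e - 1),
      mul_pos (mul_pos he hae) (show (0:ℝ) < 2 * a + e - 1 by nlinarith)]
  linarith
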